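/- Mistake bound for the Weighted Majority Algorithm: Let there be K ≥ 2 experts, T rounds, and a parameter ε ∈ (0,1). For each round t ∈ [T], let S_t ⊆ [K] be the set of experts that err at round t, define weights w_1(e) = 1 and w_{t+1}(e) = w_t(e)·(1−ε) if e ∈ S_t and w_{t+1}(e) = w_t(e) otherwise, and let W_t = Σ_{e∈[K]} w_t(e). Let B ⊆ [T] be any set of rounds such that Σ_{e∈S_t} w_t(e) ≥ W_t/2 for every t ∈ B (the rounds in which the weighted majority is wrong). Let cost* = min_{e∈[K]} |{t ∈ [T] : e ∈ S_t}| be the number of mistakes of the best expert. Then |B| < (2/(1−ε))·cost* + (2/ε)·ln K. -/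

import Mathlib

/-- **Mistake bound for the Weighted Majority Algorithm.**
`K ≥ 2` experts over `T` rounds with parameter `ε ∈ (0,1)`. `S t` is the set of experts
erring at round `t`; weights start at `1` and are multiplied by `(1-ε)` upon each mistake.
`B` is any set of rounds in which the erring experts carry at least half of the total
weight (the rounds where the weighted majority vote is wrong). With
`cost* = min_e #{t : e ∈ S t}` the number of mistakes of the best expert,
`|B| < (2/(1-ε))·cost* + (2/ε)·ln K`. -/
theorem weighted_majority_mistake_bound (K T : ℕ) (hK : 2 ≤ K)
    (ε : ℝ) (hε0 : 0 < ε) (hε1 : ε < 1)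
    (S : ℕ → Finset (Fin K))
    (w : ℕ → Fin K → ℝ)
    (hw0 : ∀ e, w 0 e = 1)
    (hw : ∀ t < T, ∀ e : Fin K, w (t + 1) e = if e ∈ S t then w t e * (1 - ε) else w t e)
    (B : Finset ℕ) (hB : B ⊆ Finset.range T)
    (hmaj : ∀ t ∈ B, (∑ e : Fin K, w t e) / 2 ≤ ∑ e ∈ S t, w t e) :
    (B.card : ℝ) <
      (2 / (1 - ε)) *
        ((Finset.univ.inf' ⟨⟨0, by omega⟩, Finset.mem_univ _⟩
          (fun e : Fin K => ((Finset.range T).filter (fun t => e ∈ S t)).card) : ℕ) : ℝ)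
      + (2 / ε) * Real.log K := by
  haveI : NeZero K := ⟨by omega⟩
  have h1ε : (0:ℝ) < 1 - ε := by linarith
  have h1ε2 : (0:ℝ) < 1 - ε/2 := by linarith
  set cost : Fin K → ℕ := fun e => ((Finset.range T).filter (fun t => e ∈ S t)).card with hcost
  set c : ℕ := Finset.univ.inf' ⟨⟨0, by omega⟩, Finset.mem_univ _⟩ cost with hc
  -- weights are powers of (1-ε)
  have hwpow : ∀ t, t ≤ T → ∀ e, w t e =
      (1 - ε) ^ (((Finset.range t).filter (fun s => e ∈ S s)).card) := by
    intro t
    induction t with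
    | zero => intro _ e; simp [hw0]
    | succ t ih =>
      intro ht e
      have ht' : t < T := by omega
      rw [hw t ht' e, ih (by omega) e, Finset.range_add_one, Finset.filter_insert]
      split_ifs with h
      · rw [Finset.card_insert_of_notMem (by simp), pow_succ]
      · rfl
  have hwpos : ∀ t, t ≤ T → ∀ e, 0 < w t e := by
    intro t ht e
    rw [hwpow t ht e]; exact pow_pos h1ε _
  set W : ℕ → ℝ := fun t => ∑ e : Fin K, w t e with hW
  have hWstep : ∀ t, t < T → W (t+1) = W t - ε * ∑ e ∈ S t, w t e := by
    intro t ht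
    have : W (t+1) = ∑ e : Fin K, ((w t e) - (if e ∈ S t then ε * w t e else 0)) := by
      apply Finset.sum_congr rfl
      intro e _
      rw [hw t ht e]
      by_cases h : e ∈ S t <;> simp [h] <;> ring
    rw [this, Finset.sum_sub_distrib]
    congr 1
    rw [Finset.sum_ite_mem, Finset.univ_inter, Finset.mul_sum]
  have hWpos : ∀ t, t ≤ T → 0 < W t := by
    intro t ht
    exact Finset.sum_pos (fun e _ => hwpos t ht e) Finset.univ_nonempty
  have hWmono : ∀ t, t < T → W (t+1) ≤ W t := by
    intro t ht
    rw [hWstep t ht]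
    have : 0 ≤ ∑ e ∈ S t, w t e :=
      Finset.sum_nonneg (fun e _ => (hwpos t (by omega) e).le)
    nlinarith
  have hWB : ∀ t, t < T → t ∈ B → W (t+1) ≤ (1 - ε/2) * W t := by
    intro t ht htB
    rw [hWstep t ht]
    have h2 := hmaj t htB
    have hWt := hWpos t (by omega)
    nlinarith
  have hWbound : ∀ t, t ≤ T → W t ≤ (1 - ε/2) ^ ((B ∩ Finset.range t).card) * K := by
    intro t
    induction t with
    | zero => intro _; simp [hW, hw0]
    | succ t ih =>
      intro ht
      have ht' : t < T := by omega
      have hKpos : (0:ℝ) ≤ (K:ℝ) := by positivity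
      by_cases h : t ∈ B
      · have hins : B ∩ Finset.range (t+1) = insert t (B ∩ Finset.range t) := by
          ext x
          simp only [Finset.mem_inter, Finset.mem_range, Finset.mem_insert]
          constructor
          · rintro ⟨hx, hx2⟩
            rcases Nat.lt_succ_iff_lt_or_eq.mp hx2 with h' | h'
            · exact Or.inr ⟨hx, h'⟩
            · exact Or.inl h'
          · rintro (rfl | ⟨hx, hx2⟩)
            · exact ⟨h, Nat.lt_succ_self _⟩
            · exact ⟨hx, by omega⟩
        rw [hins, Finset.card_insert_of_notMem (by simp)]
        calc W (t+1) ≤ (1 - ε/2) * W t := hWB t ht' h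
          _ ≤ (1 - ε/2) * ((1 - ε/2) ^ ((B ∩ Finset.range t).card) * K) := by
              apply mul_le_mul_of_nonneg_left (ih (by omega)) h1ε2.le
          _ = (1 - ε/2) ^ ((B ∩ Finset.range t).card + 1) * K := by ring
      · have hins : B ∩ Finset.range (t+1) = B ∩ Finset.range t := by
          ext x
          simp only [Finset.mem_inter, Finset.mem_range]
          constructor
          · rintro ⟨hx, hx2⟩
            refine ⟨hx, ?_⟩
            rcases Nat.lt_succ_iff_lt_or_eq.mp hx2 with h' | h'
            · exact h'
            · exact absurd (h' ▸ hx) h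
          · rintro ⟨hx, hx2⟩; exact ⟨hx, by omega⟩
        rw [hins]
        exact le_trans (hWmono t ht') (ih (by omega))
  -- lower bound via best expert
  obtain ⟨e₀, -, he₀⟩ := Finset.exists_mem_eq_inf' (⟨⟨0, by omega⟩, Finset.mem_univ _⟩ :
    (Finset.univ : Finset (Fin K)).Nonempty) cost
  have hlow : (1 - ε) ^ c ≤ W T := by
    have h1 : (1 - ε) ^ c = w T e₀ := by
      rw [hwpow T le_rfl e₀, hc, he₀]
    rw [h1]
    exact Finset.single_le_sum (f := fun e => w T e)
      (fun e _ => (hwpos T le_rfl e).le) (Finset.mem_univ e₀)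
  have hBT : B ∩ Finset.range T = B := Finset.inter_eq_left.mpr hB
  have hkey : (1 - ε) ^ c ≤ (1 - ε/2) ^ B.card * K := by
    have := hWbound T le_rfl
    rw [hBT] at this
    exact le_trans hlow this
  -- take logarithms
  have hKpos : (0:ℝ) < K := by positivity
  have hlog : (c:ℝ) * Real.log (1 - ε) ≤ (B.card : ℝ) * Real.log (1 - ε/2) + Real.log K := by
    have h1 : Real.log ((1 - ε) ^ c) ≤ Real.log ((1 - ε/2) ^ B.card * K) :=
      Real.log_le_log (pow_pos h1ε _) hkey
    rwa [Real.log_pow, Real.log_mul (by positivity) (by positivity), Real.log_pow] at h1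
  have hA : Real.log (1 - ε/2) < -(ε/2) := by
    have := Real.log_lt_sub_one_of_pos h1ε2 (by linarith)
    linarith
  have hB2 : -Real.log (1 - ε) ≤ ε / (1 - ε) := by
    have h1 : Real.log ((1-ε)⁻¹) ≤ (1-ε)⁻¹ - 1 :=
      Real.log_le_sub_one_of_pos (by positivity)
    rw [Real.log_inv] at h1
    have h2 : (1-ε)⁻¹ - 1 = ε / (1-ε) := by field_simp; ring
    linarith [h2 ▸ h1]
  have hlogK : 0 < Real.log K := by
    apply Real.log_pos
    have : (2:ℝ) ≤ K := by exact_mod_cast hK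
    linarith
  have hcnn : (0:ℝ) ≤ (c:ℝ) := Nat.cast_nonneg _
  by_cases hb : B.card = 0
  · rw [hb]
    push_cast
    have h1 : 0 ≤ 2 / (1 - ε) * (c:ℝ) := by positivity
    have h2 : 0 < 2 / ε * Real.log K := by positivity
    linarith
  · have hb1 : (1:ℝ) ≤ B.card := by exact_mod_cast Nat.one_le_iff_ne_zero.mpr hb
    have hstep : (B.card : ℝ) * (ε/2) < Real.log K + (c:ℝ) * (ε / (1-ε)) := by
      nlinarith [hlog, mul_lt_mul_of_pos_left hA (lt_of_lt_of_le one_pos hb1 : (0:ℝ) < B.card),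
        mul_le_mul_of_nonneg_left hB2 hcnn]
    have hε2 : (0:ℝ) < ε/2 := by linarith
    have : (B.card : ℝ) < (Real.log K + (c:ℝ) * (ε / (1-ε))) / (ε/2) := by
      rw [lt_div_iff₀ hε2]; exact hstep
    calc (B.card : ℝ) < (Real.log K + (c:ℝ) * (ε / (1-ε))) / (ε/2) := this
      _ = 2 / (1 - ε) * (c:ℝ) + 2 / ε * Real.log K := by field_simp; ring
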